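/- Let ρ be an irreducible unitary representation of the finitary symmetric group S∞ of ℕ on a complex Hilbert space H, and for α ∈ ℕ let H[α] denote the subspace of vectors fixed by ρ(g) for all g ∈ S∞[α]. If H[α] ≠ 0 for some α, then the union ⋃_α H[α] is dense in H. -/

import Mathlib

open scoped InnerProductSpace

/-- The finitary symmetric group of a countable set: permutations with finite support. -/
def finitarySymm (Ω : Type*) : Subgroup (Equiv.Perm Ω) where
  carrier := {g | {x | g x ≠ x}.Finite}
  one_mem' := by simp
  mul_mem' := by
    intro a b ha hb
    refine Set.Finite.subset (ha.union hb) fun x hx => ?_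
    simp only [Set.mem_setOf_eq, Equiv.Perm.mul_apply] at hx
    simp only [Set.mem_union, Set.mem_setOf_eq]
    by_cases h : b x = x
    · exact Or.inl (by simpa [h] using hx)
    · exact Or.inr h
  inv_mem' := by
    intro a ha
    refine Set.Finite.subset ha fun x hx => ?_
    simp only [Set.mem_setOf_eq] at hx ⊢
    intro h
    apply hx
    nth_rewrite 1 [← h]
    simp

/-- `S∞`, the finitary symmetric group of `ℕ`. -/
abbrev SInf := ↥(finitarySymm ℕ)

/-- Membership in the subgroup `S∞[α]`: finitary permutations fixing every `x < α`. -/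
def InSInf (α : ℕ) (g : SInf) : Prop := ∀ x < α, (g : Equiv.Perm ℕ) x = x

/-- Irreducibility of a unitary representation: the space is nonzero and the only
invariant closed subspaces are `⊥` and `⊤`. -/
def IsIrreducibleRep {G : Type*} [Group G] {H : Type*} [NormedAddCommGroup H]
    [InnerProductSpace ℂ H] [CompleteSpace H] (ρ : G →* unitary (H →L[ℂ] H)) : Prop :=
  (∃ v : H, v ≠ 0) ∧
    ∀ V : Submodule ℂ H, IsClosed (V : Set H) →
      (∀ (g : G), ∀ v ∈ V, (ρ g : H →L[ℂ] H) v ∈ V) → V = ⊥ ∨ V = ⊤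

/-- **Proposition 2.1(b)**: for an irreducible unitary representation of `S∞`, if some
subspace `H[α]` of `S∞[α]`-fixed vectors is nonzero, then `⋃_α H[α]` is dense. -/
theorem union_fixed_dense_of_irreducible {H : Type*} [NormedAddCommGroup H]
    [InnerProductSpace ℂ H] [CompleteSpace H]
    (ρ : SInf →* unitary (H →L[ℂ] H)) (hirr : IsIrreducibleRep ρ)
    (hne : ∃ (α : ℕ) (v : H), v ≠ 0 ∧ ∀ g : SInf, InSInf α g → (ρ g : H →L[ℂ] H) v = v) :
    Dense (⋃ α : ℕ, {v : H | ∀ g : SInf, InSInf α g → (ρ g : H →L[ℂ] H) v = v}) := by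
  classical
  obtain ⟨-, hirr2⟩ := hirr
  set F : ℕ → Submodule ℂ H := fun α =>
    { carrier := {v | ∀ g : SInf, InSInf α g → (ρ g : H →L[ℂ] H) v = v}
      add_mem' := fun {a b} ha hb g hg => by
        simp [map_add, ha g hg, hb g hg]
      zero_mem' := fun g hg => by simp
      smul_mem' := fun c a ha g hg => by
        simp [map_smul, ha g hg] } with hFdef
  have hmono : Monotone F := by
    intro a b hab v hv g hg
    exact hv g (fun x hx => hg x (lt_of_lt_of_le hx hab))
  have hdir : Directed (· ≤ ·) F := hmono.directed_le
  have hcoe : (⋃ α : ℕ, {v : H | ∀ g : SInf, InSInf α g → (ρ g : H →L[ℂ] H) v = v})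
      = ((⨆ α, F α : Submodule ℂ H) : Set H) := by
    rw [Submodule.coe_iSup_of_directed _ hdir]
    rfl
  have hkey : ∀ (g : SInf) (α : ℕ), ∃ γ, ∀ v ∈ F α, (ρ g : H →L[ℂ] H) v ∈ F γ := by
    intro g α
    have hgfin : {x | (g : Equiv.Perm ℕ) x ≠ x}.Finite := g.2
    set β := (hgfin.toFinset.sup id) + 1 with hβ
    have hsupp : ∀ x, β ≤ x → (g : Equiv.Perm ℕ) x = x := by
      intro x hx
      by_contra h
      have hmem : x ∈ hgfin.toFinset := hgfin.mem_toFinset.mpr h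
      have := Finset.le_sup (f := id) hmem
      simp only [id] at this
      omega
    have hlt : ∀ x, x < β → (g : Equiv.Perm ℕ) x < β := by
      intro x hx
      by_contra h
      push_neg at h
      have h2 := hsupp _ h
      have := (g : Equiv.Perm ℕ).injective h2
      omega
    refine ⟨max α β, fun v hv h hh => ?_⟩
    have hconj : InSInf α (g⁻¹ * h * g) := by
      intro x hx
      by_cases hxb : x < β
      · have hgx : (g : Equiv.Perm ℕ) x < β := hlt x hxb
        have hh2 : (h : Equiv.Perm ℕ) ((g : Equiv.Perm ℕ) x) = (g : Equiv.Perm ℕ) x :=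
          hh _ (lt_of_lt_of_le hgx (le_max_right α β))
        simp [Subgroup.coe_mul, hh2]
      · push_neg at hxb
        have hg1 : (g : Equiv.Perm ℕ) x = x := hsupp x hxb
        have hh2 : (h : Equiv.Perm ℕ) x = x := hh _ (lt_of_lt_of_le hx (le_max_left α β))
        simp only [Subgroup.coe_mul, Equiv.Perm.mul_apply, Subgroup.coe_inv, hg1, hh2]
        exact Equiv.Perm.inv_eq_iff_eq.mpr hg1.symm
    have hfix : (ρ (g⁻¹ * h * g) : H →L[ℂ] H) v = v := hv (g⁻¹ * h * g) hconj
    have hhg : h * g = g * (g⁻¹ * h * g) := by group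
    calc (ρ h : H →L[ℂ] H) ((ρ g : H →L[ℂ] H) v)
        = (ρ (h * g) : H →L[ℂ] H) v := by
          rw [map_mul]; rfl
      _ = (ρ g : H →L[ℂ] H) ((ρ (g⁻¹ * h * g) : H →L[ℂ] H) v) := by
          rw [hhg, map_mul]; rfl
      _ = (ρ g : H →L[ℂ] H) v := by rw [hfix]
  set U : Submodule ℂ H := ⨆ α, F α with hU
  have hUmaps : ∀ g : SInf, Set.MapsTo (ρ g : H →L[ℂ] H) (U : Set H) (U : Set H) := by
    intro g v hv
    rw [SetLike.mem_coe, ← SetLike.mem_coe, Submodule.coe_iSup_of_directed _ hdir,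
      Set.mem_iUnion] at hv ⊢
    obtain ⟨α, hα⟩ := hv
    obtain ⟨γ, hγ⟩ := hkey g α
    exact ⟨γ, hγ v hα⟩
  have hinv : ∀ g : SInf, ∀ v ∈ U.topologicalClosure, (ρ g : H →L[ℂ] H) v ∈
      U.topologicalClosure := by
    intro g v hv
    have hv' : v ∈ closure (U : Set H) := hv
    exact map_mem_closure (ρ g : H →L[ℂ] H).continuous hv' (hUmaps g)
  rcases hirr2 U.topologicalClosure U.isClosed_topologicalClosure hinv with hbot | htop
  · exfalso
    obtain ⟨α, v, hv0, hvfix⟩ := hne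
    have hvU : v ∈ U := Submodule.mem_iSup_of_mem α hvfix
    have : v ∈ U.topologicalClosure := U.le_topologicalClosure hvU
    rw [hbot] at this
    exact hv0 (by simpa using this)
  · rw [hcoe]
    exact Submodule.dense_iff_topologicalClosure_eq_top.mpr htop
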